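/- For the random vector (X_1, X_2, X_3) taking the eight values (1,2,4), (2,4,5), (3,1,2), (4,2,3), (5,3,4), (2,3,1), (3,4,2), (4,5,3) each with probability 1/8: the relative quality function satisfies q({1}) = q({2}) = q({1,2}) = q({1,3}) = 3/8 and q({3}) = q({2,3}) = 2/8 (so q is not symmetric), yet for every t > 0 the indicators χ_1(t), χ_2(t), χ_3(t) are exchangeable: Pr(χ(t) = x) = 1/8 if |x|=1 and t ∈ [2,5), Pr(χ(t)=x) = 1/8 if |x|=2 and t ∈ [1,4), and 0 otherwise (for |x| ∈ {1,2}). -/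

import Mathlib

open MeasureTheory

/-- Uniform probability measure on eight equally likely outcomes. -/
noncomputable def unif8 : Measure (Fin 8) := (PMF.uniformOfFintype (Fin 8)).toMeasure

/-- The lifetimes `(X₁, X₂, X₃)` of the example: the eight equally likely values
`(1,2,4), (2,4,5), (3,1,2), (4,2,3), (5,3,4), (2,3,1), (3,4,2), (4,5,3)`. -/
def exLife : Fin 8 → Fin 3 → ℝ :=
  ![![1, 2, 4], ![2, 4, 5], ![3, 1, 2], ![4, 2, 3],
    ![5, 3, 4], ![2, 3, 1], ![3, 4, 2], ![4, 5, 3]]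

/-- Relative quality function of the example. -/
noncomputable def qEx (A : Finset (Fin 3)) : ℝ :=
  (unif8 {ω | ∀ i ∉ A, ∀ j ∈ A, exLife ω i < exLife ω j}).toReal

/-- Natural-number version of the lifetimes, for decidable computations. -/
def natLife : Fin 8 → Fin 3 → ℕ :=
  ![![1, 2, 4], ![2, 4, 5], ![3, 1, 2], ![4, 2, 3],
    ![5, 3, 4], ![2, 3, 1], ![3, 4, 2], ![4, 5, 3]]

lemma exLife_eq (ω : Fin 8) (i : Fin 3) : exLife ω i = (natLife ω i : ℝ) := by
  fin_cases ω <;> fin_cases i <;> norm_num [exLife, natLife]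

lemma unif8_coe (s : Finset (Fin 8)) : (unif8 ↑s).toReal = s.card / 8 := by
  rw [unif8, PMF.toMeasure_apply_finset]
  simp [PMF.uniformOfFintype_apply, div_eq_mul_inv]

lemma qEx_eq (A : Finset (Fin 3)) (n : ℕ)
    (h : (Finset.univ.filter fun ω => ∀ i ∉ A, ∀ j ∈ A, natLife ω i < natLife ω j).card = n) :
    qEx A = n / 8 := by
  have hset : {ω | ∀ i ∉ A, ∀ j ∈ A, exLife ω i < exLife ω j}
      = ↑(Finset.univ.filter fun ω => ∀ i ∉ A, ∀ j ∈ A, natLife ω i < natLife ω j) := by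
    ext ω; simp [exLife_eq, Nat.cast_lt]
  rw [qEx, hset, unif8_coe, h]

lemma chi_region (t : ℝ) (k : ℕ) (h1 : (k:ℝ) ≤ t) (h2 : t < k + 1) (ω : Fin 8) (i : Fin 3) :
    decide (t < exLife ω i) = decide (k < natLife ω i) := by
  rw [exLife_eq, decide_eq_decide]
  constructor
  · intro h
    have : (k:ℝ) < natLife ω i := lt_of_le_of_lt h1 h
    exact_mod_cast this
  · intro h
    have : (k:ℝ) + 1 ≤ natLife ω i := by exact_mod_cast h
    linarith

lemma chi_ge5 (t : ℝ) (h : 5 ≤ t) (ω : Fin 8) (i : Fin 3) :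
    decide (t < exLife ω i) = false := by
  have h5 : ∀ ω i, natLife ω i ≤ 5 := by decide
  simp only [decide_eq_false_iff_not, not_lt, exLife_eq]
  have : (natLife ω i : ℝ) ≤ 5 := by exact_mod_cast h5 ω i
  linarith

lemma measure_region (t : ℝ) (k : ℕ) (h1 : (k:ℝ) ≤ t) (h2 : t < k + 1) (x : Fin 3 → Bool) :
    (unif8 {ω | (fun i => decide (t < exLife ω i)) = x}).toReal
      = ((Finset.univ.filter fun ω => (fun i => decide (k < natLife ω i)) = x).card : ℝ) / 8 := by
  have hset : {ω | (fun i => decide (t < exLife ω i)) = x}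
      = ↑(Finset.univ.filter fun ω => (fun i => decide (k < natLife ω i)) = x) := by
    ext ω
    simp only [Set.mem_setOf_eq, Finset.coe_filter, Finset.mem_univ, true_and,
      Set.mem_setOf_eq, chi_region t k h1 h2]
  rw [hset, unif8_coe]

lemma count_master : ∀ k : Fin 6, ∀ x : Fin 3 → Bool,
    ((Finset.univ.filter fun i => x i = true).card = 1 →
      (Finset.univ.filter fun ω => (fun i => decide ((k:ℕ) < natLife ω i)) = x).card
        = if 2 ≤ (k:ℕ) ∧ (k:ℕ) < 5 then 1 else 0) ∧
    ((Finset.univ.filter fun i => x i = true).card = 2 →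
      (Finset.univ.filter fun ω => (fun i => decide ((k:ℕ) < natLife ω i)) = x).card
        = if 1 ≤ (k:ℕ) ∧ (k:ℕ) < 4 then 1 else 0) := by decide

lemma far_case (t : ℝ) (h : 5 ≤ t) (x : Fin 3 → Bool)
    (hx : x ≠ fun _ => false) :
    (unif8 {ω | (fun i => decide (t < exLife ω i)) = x}).toReal = 0 := by
  have hset : {ω | (fun i => decide (t < exLife ω i)) = x} = ∅ := by
    rw [Set.eq_empty_iff_forall_notMem]
    intro ω hω
    apply hx
    rw [← hω]
    funext i
    exact chi_ge5 t h ω i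
  rw [hset]
  simp

/-- In the example, `q({1}) = q({2}) = q({1,2}) = q({1,3}) = 3/8` and
`q({3}) = q({2,3}) = 2/8`, so `q` is not symmetric; yet the component states are
exchangeable at every time `t > 0`: `Pr(χ(t) = x) = 1/8` for `t ∈ [2,5)` (else `0`)
when `|x| = 1`, and `Pr(χ(t) = x) = 1/8` for `t ∈ [1,4)` (else `0`) when `|x| = 2`. -/
theorem stmt_18 :
    qEx {0} = 3 / 8 ∧ qEx {1} = 3 / 8 ∧ qEx {0, 1} = 3 / 8 ∧ qEx {0, 2} = 3 / 8 ∧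
    qEx {2} = 2 / 8 ∧ qEx {1, 2} = 2 / 8 ∧
    (∀ t : ℝ, 0 < t → ∀ x : Fin 3 → Bool,
      ((Finset.univ.filter fun i => x i = true).card = 1 →
        (unif8 {ω | (fun i => decide (t < exLife ω i)) = x}).toReal =
          if 2 ≤ t ∧ t < 5 then 1 / 8 else 0) ∧
      ((Finset.univ.filter fun i => x i = true).card = 2 →
        (unif8 {ω | (fun i => decide (t < exLife ω i)) = x}).toReal =
          if 1 ≤ t ∧ t < 4 then 1 / 8 else 0)) := by
  refine ⟨qEx_eq _ 3 (by decide), qEx_eq _ 3 (by decide), qEx_eq _ 3 (by decide),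
    qEx_eq _ 3 (by decide), qEx_eq _ 2 (by decide), qEx_eq _ 2 (by decide), ?_⟩
  intro t ht x
  rcases lt_or_ge t 5 with h5 | h5
  · -- find the integer region containing t
    obtain ⟨k, hk4, hk1, hk2⟩ : ∃ k : ℕ, k ≤ 4 ∧ (k:ℝ) ≤ t ∧ t < k + 1 := by
      have h0 : (0:ℤ) ≤ ⌊t⌋ := Int.floor_nonneg.mpr ht.le
      have hcast : ((⌊t⌋.toNat : ℕ) : ℝ) = ((⌊t⌋ : ℤ) : ℝ) := by
        exact_mod_cast congrArg (fun z : ℤ => (z : ℝ)) (Int.toNat_of_nonneg h0)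
      refine ⟨⌊t⌋.toNat, ?_, ?_, ?_⟩
      · have : ⌊t⌋ < 5 := Int.floor_lt.mpr (by exact_mod_cast h5)
        omega
      · rw [hcast]; exact Int.floor_le t
      · rw [hcast]; exact Int.lt_floor_add_one t
    have c1 : (2 ≤ t ∧ t < 5) ↔ (2 ≤ k ∧ k < 5) := by
      constructor
      · rintro ⟨a, b⟩
        constructor
        · have h' : (1:ℝ) < (k:ℕ) := by linarith
          have : 1 < k := by exact_mod_cast h'
          omega
        · omega
      · rintro ⟨a, b⟩
        have ha : (2:ℝ) ≤ (k:ℕ) := by exact_mod_cast a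
        have hb : (k:ℝ) + 1 ≤ 5 := by
          have : k + 1 ≤ 5 := by omega
          exact_mod_cast this
        exact ⟨le_trans ha hk1, lt_of_lt_of_le hk2 hb⟩
    have c2 : (1 ≤ t ∧ t < 4) ↔ (1 ≤ k ∧ k < 4) := by
      constructor
      · rintro ⟨a, b⟩
        constructor
        · have h' : (0:ℝ) < (k:ℕ) := by linarith
          have : 0 < k := by exact_mod_cast h'
          omega
        · have h' : (k:ℝ) < 4 := lt_of_le_of_lt hk1 b
          exact_mod_cast h'
      · rintro ⟨a, b⟩
        have ha : (1:ℝ) ≤ (k:ℕ) := by exact_mod_cast a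
        have hb : (k:ℝ) + 1 ≤ 4 := by
          have : k + 1 ≤ 4 := by omega
          exact_mod_cast this
        exact ⟨le_trans ha hk1, lt_of_lt_of_le hk2 hb⟩
    have hmk := count_master ⟨k, by omega⟩ x
    constructor
    · intro hcard
      have hc := hmk.1 hcard
      rw [measure_region t k hk1 hk2, hc]
      by_cases h : 2 ≤ k ∧ k < 5
      · rw [if_pos h, if_pos (c1.mpr h)]; norm_num
      · rw [if_neg h, if_neg (fun hr => h (c1.mp hr))]; norm_num
    · intro hcard
      have hc := hmk.2 hcard
      rw [measure_region t k hk1 hk2, hc]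
      by_cases h : 1 ≤ k ∧ k < 4
      · rw [if_pos h, if_pos (c2.mpr h)]; norm_num
      · rw [if_neg h, if_neg (fun hr => h (c2.mp hr))]; norm_num
  · -- t ≥ 5 : everything is dead
    have hzero : ∀ hx : x ≠ fun _ => false,
        (unif8 {ω | (fun i => decide (t < exLife ω i)) = x}).toReal = 0 :=
      fun hx => far_case t h5 x hx
    constructor
    · intro hcard
      have hx : x ≠ fun _ => false := by
        rintro rfl; simp at hcard
      rw [hzero hx, if_neg (fun hr => absurd h5 (not_le.mpr hr.2))]
    · intro hcard
      have hx : x ≠ fun _ => false := by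
        rintro rfl; simp at hcard
      rw [hzero hx, if_neg (fun hr => absurd h5 (not_le.mpr (hr.2.trans (by norm_num))))]
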